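/- For Cauchy densities p₁(x) = s₁/(π(x²+s₁²)) and p₂(x) = s₂/(π(x²+s₂²)) with s₁, s₂ > 0, the probability of error with equal priors satisfies P_e = ∫ min(p₁(x)/2, p₂(x)/2) dx ≤ √λ/(λ+1), where λ = s₂/s₁. -/

import Mathlib

open Real MeasureTheory

lemma integrable_inv_sq_add_sq (a : ℝ) (ha : 0 < a) :
    Integrable fun x : ℝ => (x ^ 2 + a ^ 2)⁻¹ := by
  have h : Integrable fun x : ℝ => (1 + (a⁻¹ * x) ^ 2)⁻¹ :=
    integrable_inv_one_add_sq.comp_mul_left' (inv_ne_zero ha.ne')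
  have := h.const_mul ((a ^ 2)⁻¹)
  refine this.congr (Filter.Eventually.of_forall fun x => ?_)
  field_simp
  ring

lemma integral_inv_sq_add_sq' (a : ℝ) (ha : 0 < a) :
    ∫ x : ℝ, (x ^ 2 + a ^ 2)⁻¹ = π / a := by
  have key : ∀ x : ℝ, (x ^ 2 + a ^ 2)⁻¹ = (a ^ 2)⁻¹ * (1 + (a⁻¹ * x) ^ 2)⁻¹ := by
    intro x; field_simp; ring
  simp_rw [key]
  rw [integral_const_mul, Measure.integral_comp_mul_left (fun y => (1 + y ^ 2)⁻¹) a⁻¹,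
    integral_univ_inv_one_add_sq, inv_inv, abs_of_pos ha, smul_eq_mul]
  field_simp

theorem cauchy_bhattacharyya_bound (s₁ s₂ : ℝ) (hs₁ : 0 < s₁) (hs₂ : 0 < s₂) :
    ∫ x : ℝ, min (s₁ / (π * (x ^ 2 + s₁ ^ 2)) / 2) (s₂ / (π * (x ^ 2 + s₂ ^ 2)) / 2)
      ≤ Real.sqrt (s₂ / s₁) / (s₂ / s₁ + 1) := by
  have hπ := Real.pi_pos
  set c := Real.sqrt (s₁ * s₂) with hc
  have hcpos : 0 < c := Real.sqrt_pos.mpr (by positivity)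
  have hc2 : c ^ 2 = s₁ * s₂ := Real.sq_sqrt (by positivity)
  set g : ℝ → ℝ := fun x => (s₁ * s₂ / (π * (s₁ + s₂))) * (x ^ 2 + c ^ 2)⁻¹ with hg
  have hgint : Integrable g :=
    (integrable_inv_sq_add_sq c hcpos).const_mul _
  have key : ∀ a b : ℝ, 0 < a → 0 < b → min (a / 2) (b / 2) ≤ a * b / (a + b) := by
    intro a b ha hb
    rcases le_total a b with h | h
    · rw [min_eq_left (by linarith), div_le_div_iff₀ (by norm_num) (by linarith)]
      nlinarith
    · rw [min_eq_right (by linarith), div_le_div_iff₀ (by norm_num) (by linarith)]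
      nlinarith
  have hle : ∀ x : ℝ, min (s₁ / (π * (x ^ 2 + s₁ ^ 2)) / 2) (s₂ / (π * (x ^ 2 + s₂ ^ 2)) / 2)
      ≤ g x := by
    intro x
    have h1 : (0:ℝ) < x ^ 2 + s₁ ^ 2 := by positivity
    have h2 : (0:ℝ) < x ^ 2 + s₂ ^ 2 := by positivity
    have hp₁ : (0:ℝ) < s₁ / (π * (x ^ 2 + s₁ ^ 2)) := by positivity
    have hp₂ : (0:ℝ) < s₂ / (π * (x ^ 2 + s₂ ^ 2)) := by positivity
    have hgx : g x = s₁ * s₂ / (π * (s₁ + s₂) * (x ^ 2 + s₁ * s₂)) := by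
      rw [hg]; simp only [← hc2]; field_simp
    have heq : (s₁ / (π * (x ^ 2 + s₁ ^ 2))) * (s₂ / (π * (x ^ 2 + s₂ ^ 2)))
        / ((s₁ / (π * (x ^ 2 + s₁ ^ 2))) + (s₂ / (π * (x ^ 2 + s₂ ^ 2)))) = g x := by
      have hsum : (0:ℝ) < s₁ / (π * (x ^ 2 + s₁ ^ 2)) + s₂ / (π * (x ^ 2 + s₂ ^ 2)) := by
        positivity
      rw [hgx, div_eq_div_iff hsum.ne' (by positivity)]
      field_simp
      ring
    exact (key _ _ hp₁ hp₂).trans_eq heq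
  have hnn : ∀ x : ℝ, 0 ≤ min (s₁ / (π * (x ^ 2 + s₁ ^ 2)) / 2) (s₂ / (π * (x ^ 2 + s₂ ^ 2)) / 2) := by
    intro x
    have h1 : (0:ℝ) < x ^ 2 + s₁ ^ 2 := by positivity
    have h2 : (0:ℝ) < x ^ 2 + s₂ ^ 2 := by positivity
    exact le_min (by positivity) (by positivity)
  have hmono := integral_mono_of_nonneg (Filter.Eventually.of_forall hnn) hgint
    (Filter.Eventually.of_forall hle)
  refine hmono.trans ?_
  have : ∫ x, g x = (s₁ * s₂ / (π * (s₁ + s₂))) * (π / c) := by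
    rw [hg, integral_const_mul, integral_inv_sq_add_sq' c hcpos]
  rw [this]
  have h1 : (0:ℝ) < Real.sqrt s₁ := Real.sqrt_pos.mpr hs₁
  have hm : Real.sqrt s₁ * Real.sqrt s₁ = s₁ := Real.mul_self_sqrt hs₁.le
  have hrhs : Real.sqrt (s₂ / s₁) / (s₂ / s₁ + 1) = c / (s₁ + s₂) := by
    rw [hc, Real.sqrt_div hs₂.le, Real.sqrt_mul hs₁.le]
    field_simp
    ring_nf
    linear_combination (-1 * (s₁ + s₂)) * Real.sq_sqrt hs₁.le
  rw [hrhs]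
  have hcc : c * c = s₁ * s₂ := by nlinarith [hc2]
  refine le_of_eq ?_
  field_simp
  linear_combination (-1) * hc2
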